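/- arXiv:1011.0079 — 2 statements merged into one kernel-verified Lean document; each statement's English description precedes it below -/
import Mathlib

section
/- Let (A, ρ, 𝔹) be a complete local contact algebra and σ a bounded cluster in (A, ρ, 𝔹). Then J_σ = 𝔹 \ σ is a prime element of the frame of δ-ideals of (A, ρ, 𝔹). -/
/-- `I` is a δ-ideal of the local contact algebra `(A, ρ, 𝔹)`. -/
def IsDeltaIdeal {A : Type*} [CompleteBooleanAlgebra A] (ρ : A → A → Prop) (𝔹 : Set A)
    (I : Set A) : Prop :=
  (⊥ ∈ I) ∧ (∀ a b : A, a ≤ b → b ∈ I → a ∈ I) ∧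
  (∀ a b : A, a ∈ I → b ∈ I → a ⊔ b ∈ I) ∧ I ⊆ 𝔹 ∧
  (∀ a ∈ I, ∃ b ∈ I, ¬ ρ a bᶜ)

/-- If σ is a bounded cluster of a complete local contact algebra (A, ρ, 𝔹),
then J_σ = 𝔹 \ σ is a prime element of the frame of δ-ideals (whose top is 𝔹
and whose meets are intersections). -/
theorem stmt_12 {A : Type*} [CompleteBooleanAlgebra A] (ρ : A → A → Prop) (𝔹 : Set A)
    (hC1 : ∀ a : A, a ≠ ⊥ → ρ a a)
    (hC2 : ∀ a b : A, ρ a b → a ≠ ⊥ ∧ b ≠ ⊥)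
    (hC3 : ∀ a b : A, ρ a b → ρ b a)
    (hC4 : ∀ a b c : A, ρ a (b ⊔ c) ↔ ρ a b ∨ ρ a c)
    (hbot : ⊥ ∈ 𝔹)
    (hdown : ∀ a b : A, a ≤ b → b ∈ 𝔹 → a ∈ 𝔹)
    (hsup : ∀ a b : A, a ∈ 𝔹 → b ∈ 𝔹 → a ⊔ b ∈ 𝔹)
    (hBC1 : ∀ a c : A, a ∈ 𝔹 → ¬ ρ a cᶜ → ∃ b ∈ 𝔹, ¬ ρ a bᶜ ∧ ¬ ρ b cᶜ)
    (hBC2 : ∀ a b : A, ρ a b → ∃ c ∈ 𝔹, ρ a (c ⊓ b))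
    (hBC3 : ∀ a : A, a ≠ ⊥ → ∃ b ∈ 𝔹, b ≠ ⊥ ∧ ¬ ρ b aᶜ)
    (σ : Set A)
    -- σ is a cluster in (A, C_ρ), where C_ρ a b := ρ a b ∨ (a ∉ 𝔹 ∧ b ∉ 𝔹)
    (hne : σ.Nonempty)
    (hK1 : ∀ a ∈ σ, ∀ b ∈ σ, ρ a b ∨ (a ∉ 𝔹 ∧ b ∉ 𝔹))
    (hK2 : ∀ a b : A, a ⊔ b ∈ σ → a ∈ σ ∨ b ∈ σ)
    (hK3 : ∀ a : A, (∀ b ∈ σ, ρ a b ∨ (a ∉ 𝔹 ∧ b ∉ 𝔹)) → a ∈ σ)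
    -- σ is bounded
    (hb : (σ ∩ 𝔹).Nonempty) :
    IsDeltaIdeal ρ 𝔹 (𝔹 \ σ) ∧ 𝔹 \ σ ≠ 𝔹 ∧
    (∀ I₁ I₂ : Set A, IsDeltaIdeal ρ 𝔹 I₁ → IsDeltaIdeal ρ 𝔹 I₂ →
      I₁ ∩ I₂ = 𝔹 \ σ → I₁ = 𝔹 \ σ ∨ I₂ = 𝔹 \ σ) := by
  -- σ is upward closed
  have hmono : ∀ a ∈ σ, ∀ b : A, a ≤ b → b ∈ σ := by
    intro a ha b hab
    apply hK3
    intro c hc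
    rcases hK1 a ha c hc with h | ⟨ha𝔹, hc𝔹⟩
    · left
      have : ρ c (a ⊔ b) := (hC4 c a b).mpr (Or.inl (hC3 a c h))
      rw [sup_eq_right.mpr hab] at this
      exact hC3 c b this
    · exact Or.inr ⟨fun hb𝔹 => ha𝔹 (hdown a b hab hb𝔹), hc𝔹⟩
  have htop : (⊤ : A) ∈ σ := by
    obtain ⟨x, hx⟩ := hne
    exact hmono x hx ⊤ le_top
  have hbotnot : (⊥ : A) ∉ σ := by
    intro h
    rcases hK1 ⊥ h ⊥ h with h' | ⟨h', _⟩
    · exact (hC2 ⊥ ⊥ h').1 rfl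
    · exact h' hbot
  have hdelta : IsDeltaIdeal ρ 𝔹 (𝔹 \ σ) := by
    refine ⟨⟨hbot, hbotnot⟩, ?_, ?_, fun x hx => hx.1, ?_⟩
    · intro a b hab hb
      exact ⟨hdown a b hab hb.1, fun ha => hb.2 (hmono a ha b hab)⟩
    · intro a b ha hb
      exact ⟨hsup a b ha.1 hb.1, fun h => (hK2 a b h).elim ha.2 hb.2⟩
    · intro a ha
      have h1 : ¬ (∀ c ∈ σ, ρ a c ∨ (a ∉ 𝔹 ∧ c ∉ 𝔹)) := fun h => ha.2 (hK3 a h)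
      push_neg at h1
      obtain ⟨c, hc, hnc, _⟩ := h1
      have hnc' : ¬ ρ a (cᶜ)ᶜ := by rwa [compl_compl]
      obtain ⟨b, hb𝔹, hab, hbc⟩ := hBC1 a cᶜ ha.1 hnc'
      rw [compl_compl] at hbc
      refine ⟨b, ⟨hb𝔹, fun hbσ => ?_⟩, hab⟩
      rcases hK1 b hbσ c hc with h | ⟨h, _⟩
      · exact hbc h
      · exact h hb𝔹
  refine ⟨hdelta, ?_, ?_⟩
  · intro h
    obtain ⟨x, hxσ, hx𝔹⟩ := hb
    have : x ∈ 𝔹 \ σ := by rw [h]; exact hx𝔹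
    exact this.2 hxσ
  · intro I₁ I₂ hI₁ hI₂ hinter
    by_contra hcon
    push_neg at hcon
    obtain ⟨h1, h2⟩ := hcon
    have hsub1 : 𝔹 \ σ ⊆ I₁ := hinter ▸ Set.inter_subset_left
    have hsub2 : 𝔹 \ σ ⊆ I₂ := hinter ▸ Set.inter_subset_right
    -- get a ∈ I₁ ∩ σ and b ∈ I₂ ∩ σ
    obtain ⟨a, haI, haJ⟩ := Set.not_subset.mp (fun h => h1 (Set.Subset.antisymm h hsub1))
    obtain ⟨b, hbI, hbJ⟩ := Set.not_subset.mp (fun h => h2 (Set.Subset.antisymm h hsub2))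
    have ha𝔹 : a ∈ 𝔹 := hI₁.2.2.2.1 haI
    have hb𝔹 : b ∈ 𝔹 := hI₂.2.2.2.1 hbI
    have haσ : a ∈ σ := by by_contra h; exact haJ ⟨ha𝔹, h⟩
    have hbσ : b ∈ σ := by by_contra h; exact hbJ ⟨hb𝔹, h⟩
    obtain ⟨a₁, ha₁I, ha₁⟩ := hI₁.2.2.2.2 a haI
    obtain ⟨b₁, hb₁I, hb₁⟩ := hI₂.2.2.2.2 b hbI
    -- a₁ ⊓ b₁ ∈ I₁ ∩ I₂ = 𝔹 \ σ, hence ∉ σ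
    have hmI : a₁ ⊓ b₁ ∈ 𝔹 \ σ := by
      rw [← hinter]
      exact ⟨hI₁.2.1 _ a₁ inf_le_left ha₁I, hI₂.2.1 _ b₁ inf_le_right hb₁I⟩
    have hsplit : (a₁ ⊓ b₁) ⊔ (a₁ᶜ ⊔ b₁ᶜ) ∈ σ := by
      have : (a₁ ⊓ b₁) ⊔ (a₁ᶜ ⊔ b₁ᶜ) = ⊤ := by
        rw [← compl_inf, sup_compl_eq_top]
      rw [this]; exact htop
    rcases hK2 _ _ hsplit with h | h
    · exact hmI.2 h
    rcases hK2 _ _ h with h | h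
    · rcases hK1 a haσ a₁ᶜ h with h' | ⟨h', _⟩
      · exact ha₁ h'
      · exact h' ha𝔹
    · rcases hK1 b hbσ b₁ᶜ h with h' | ⟨h', _⟩
      · exact hb₁ h'
      · exact h' hb𝔹
end

section
/- Let (A, ρ, 𝔹) and (B, η, 𝔹') be local contact algebras and φ : A → B an LCA-isomorphism (a Boolean isomorphism with a ρ b iff φ(a) η φ(b), and a ∈ 𝔹 iff φ(a) ∈ 𝔹'). Then for every a ∈ A, I_{φ(a)} = ⋁{I_{φ(b)} : b ∈ 𝔹, b ≪_ρ a}, where the join is taken in the frame of δ-ideals of (B, η, 𝔹'), and moreover this join equals the union ⋃{I_{φ(b)} : b ∈ 𝔹, b ≪_ρ a}. -/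
/-- The join of a family of ideals in Idl(B): all finite joins of elements
of the members of the family. -/
def idealJoin {B : Type*} [BooleanAlgebra B] (S : Set (Set B)) : Set B :=
  {x : B | ∃ s : Finset B, (↑s : Set B) ⊆ ⋃₀ S ∧ x = s.sup id}

/-- If φ : (A, ρ, 𝔹) → (B, η, 𝔹') is an LCA-isomorphism, then for every a ∈ A,
I_{φ(a)} = ⋁{I_{φ(b)} : b ∈ 𝔹, b ≪_ρ a} (join in the frame of δ-ideals of
(B, η, 𝔹'), which coincides with the join of ideals), and moreover this join
equals the union ⋃{I_{φ(b)} : b ∈ 𝔹, b ≪_ρ a}.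
Here I_c = {d ∈ 𝔹' : d ≪_η c} and u ≪_θ v means ¬ θ u vᶜ. -/
theorem stmt_19 {A B : Type*} [BooleanAlgebra A] [BooleanAlgebra B]
    (ρ : A → A → Prop) (𝔹 : Set A) (η : B → B → Prop) (𝔹' : Set B)
    -- (A, ρ, 𝔹) is a local contact algebra
    (hC1 : ∀ a : A, a ≠ ⊥ → ρ a a)
    (hC2 : ∀ a b : A, ρ a b → a ≠ ⊥ ∧ b ≠ ⊥)
    (hC3 : ∀ a b : A, ρ a b → ρ b a)
    (hC4 : ∀ a b c : A, ρ a (b ⊔ c) ↔ ρ a b ∨ ρ a c)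
    (hbot : ⊥ ∈ 𝔹)
    (hdown : ∀ a b : A, a ≤ b → b ∈ 𝔹 → a ∈ 𝔹)
    (hsup : ∀ a b : A, a ∈ 𝔹 → b ∈ 𝔹 → a ⊔ b ∈ 𝔹)
    (hBC1 : ∀ a c : A, a ∈ 𝔹 → ¬ ρ a cᶜ → ∃ b ∈ 𝔹, ¬ ρ a bᶜ ∧ ¬ ρ b cᶜ)
    (hBC2 : ∀ a b : A, ρ a b → ∃ c ∈ 𝔹, ρ a (c ⊓ b))
    (hBC3 : ∀ a : A, a ≠ ⊥ → ∃ b ∈ 𝔹, b ≠ ⊥ ∧ ¬ ρ b aᶜ)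
    -- (B, η, 𝔹') is a local contact algebra
    (hC1' : ∀ a : B, a ≠ ⊥ → η a a)
    (hC2' : ∀ a b : B, η a b → a ≠ ⊥ ∧ b ≠ ⊥)
    (hC3' : ∀ a b : B, η a b → η b a)
    (hC4' : ∀ a b c : B, η a (b ⊔ c) ↔ η a b ∨ η a c)
    (hbot' : ⊥ ∈ 𝔹')
    (hdown' : ∀ a b : B, a ≤ b → b ∈ 𝔹' → a ∈ 𝔹')
    (hsup' : ∀ a b : B, a ∈ 𝔹' → b ∈ 𝔹' → a ⊔ b ∈ 𝔹')
    (hBC1' : ∀ a c : B, a ∈ 𝔹' → ¬ η a cᶜ → ∃ b ∈ 𝔹', ¬ η a bᶜ ∧ ¬ η b cᶜ)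
    (hBC2' : ∀ a b : B, η a b → ∃ c ∈ 𝔹', η a (c ⊓ b))
    (hBC3' : ∀ a : B, a ≠ ⊥ → ∃ b ∈ 𝔹', b ≠ ⊥ ∧ ¬ η b aᶜ)
    -- φ is an LCA-isomorphism
    (φ : A → B) (hbij : Function.Bijective φ)
    (hφsup : ∀ a b : A, φ (a ⊔ b) = φ a ⊔ φ b)
    (hφinf : ∀ a b : A, φ (a ⊓ b) = φ a ⊓ φ b)
    (hφcompl : ∀ a : A, φ aᶜ = (φ a)ᶜ)
    (hφbot : φ ⊥ = ⊥) (hφtop : φ ⊤ = ⊤)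
    (hφρ : ∀ a b : A, ρ a b ↔ η (φ a) (φ b))
    (hφ𝔹 : ∀ a : A, a ∈ 𝔹 ↔ φ a ∈ 𝔹')
    (a : A) :
    {d : B | d ∈ 𝔹' ∧ ¬ η d (φ a)ᶜ} =
      idealJoin {I : Set B | ∃ b : A, b ∈ 𝔹 ∧ ¬ ρ b aᶜ ∧
        I = {d : B | d ∈ 𝔹' ∧ ¬ η d (φ b)ᶜ}} ∧
    {d : B | d ∈ 𝔹' ∧ ¬ η d (φ a)ᶜ} =
      ⋃₀ {I : Set B | ∃ b : A, b ∈ 𝔹 ∧ ¬ ρ b aᶜ ∧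
        I = {d : B | d ∈ 𝔹' ∧ ¬ η d (φ b)ᶜ}} := by

  set S : Set (Set B) := {I : Set B | ∃ b : A, b ∈ 𝔹 ∧ ¬ ρ b aᶜ ∧
      I = {d : B | d ∈ 𝔹' ∧ ¬ η d (φ b)ᶜ}} with hS
  have ηmono2 : ∀ x y y' : B, η x y → y ≤ y' → η x y' := by
    intro x y y' h hle
    have := (hC4' x y y').2 (Or.inl h)
    rwa [sup_eq_right.mpr hle] at this
  have φmono : ∀ x y : A, x ≤ y → φ x ≤ φ y := by
    intro x y h
    have := hφsup x y
    rw [sup_eq_right.mpr h] at this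
    rw [this]; exact le_sup_left
  have key : {d : B | d ∈ 𝔹' ∧ ¬ η d (φ a)ᶜ} = ⋃₀ S := by
    ext d
    simp only [Set.mem_sUnion, Set.mem_setOf_eq, hS]
    constructor
    · rintro ⟨hd, hdη⟩
      obtain ⟨e, he, hde, hea⟩ := hBC1' d (φ a) hd hdη
      obtain ⟨b, rfl⟩ := hbij.2 e
      refine ⟨_, ⟨b, (hφ𝔹 b).2 he, ?_, rfl⟩, hd, hde⟩
      rw [hφρ, hφcompl]; exact hea
    · rintro ⟨I, ⟨b, hb, hba, rfl⟩, hd, hdb⟩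
      refine ⟨hd, fun h => hdb ?_⟩
      have hle : b ≤ a := by
        by_contra hle
        have h0 : b ⊓ aᶜ ≠ ⊥ := by
          intro h0
          exact hle (disjoint_compl_right_iff.mp (disjoint_iff.mpr h0))
        have hρ := hC1 _ h0
        apply hba
        have step1 : ρ (b ⊓ aᶜ) aᶜ := by
          have := (hC4 (b ⊓ aᶜ) aᶜ (b ⊓ aᶜ)).2 (Or.inr hρ)
          rwa [sup_eq_left.mpr inf_le_right] at this
        have step2 : ρ aᶜ b := by
          have := (hC4 aᶜ b (b ⊓ aᶜ)).2 (Or.inr (hC3 _ _ step1))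
          rwa [sup_eq_left.mpr inf_le_left] at this
        exact hC3 _ _ step2
      exact ηmono2 _ _ _ h (compl_le_compl (φmono _ _ hle))
  have closed_bot : (⊥ : B) ∈ {d : B | d ∈ 𝔹' ∧ ¬ η d (φ a)ᶜ} := by
    exact ⟨hbot', fun h => (hC2' _ _ h).1 rfl⟩
  have closed_sup : ∀ x y : B, x ∈ {d : B | d ∈ 𝔹' ∧ ¬ η d (φ a)ᶜ} →
      y ∈ {d : B | d ∈ 𝔹' ∧ ¬ η d (φ a)ᶜ} →
      x ⊔ y ∈ {d : B | d ∈ 𝔹' ∧ ¬ η d (φ a)ᶜ} := by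
    rintro x y ⟨hx, hx2⟩ ⟨hy, hy2⟩
    refine ⟨hsup' _ _ hx hy, fun h => ?_⟩
    rcases (hC4' _ _ _).1 (hC3' _ _ h) with h' | h'
    · exact hx2 (hC3' _ _ h')
    · exact hy2 (hC3' _ _ h')
  have join_eq : idealJoin S = {d : B | d ∈ 𝔹' ∧ ¬ η d (φ a)ᶜ} := by
    ext x
    constructor
    · rintro ⟨s, hs, rfl⟩
      rw [← key] at hs
      letI : DecidableEq B := Classical.decEq B
      induction s using Finset.induction with
      | empty => simpa using closed_bot
      | insert hnot ih =>
        rename_i c t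
        rw [Finset.coe_insert, Set.insert_subset_iff] at hs
        rw [Finset.sup_insert]
        exact closed_sup _ _ hs.1 (t hs.2)
    · intro hx
      refine ⟨{x}, ?_, by simp⟩
      rw [← key]
      simpa using hx
  exact ⟨join_eq.symm, key⟩
end
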